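/- arXiv:2511.18582 — 3 statements merged into one kernel-verified Lean document; each statement's English description precedes it below -/
import Mathlib

section
/- Under the treated scoring rule S_t(a,r) with ∂S_t/∂a > 0, the optimal switching policy is a cutoff rule with threshold τ* = κ − λ, where λ = −(∂S_t/∂r)/(∂S_t/∂a). In particular, τ* < κ if ∂S_t/∂r < 0, τ* > κ if ∂S_t/∂r > 0, and τ* = κ if ∂S_t/∂r = 0. -/
open MeasureTheory Set

/-- Under the treated scoring rule with constant marginal weights
`Sa = ∂S_t/∂a > 0` and `Sr = ∂S_t/∂r`, the score of a cutoff policy `τ` is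
`Sa * A(τ) + Sr * r(τ)` with `A(τ) = θ + ∫_{1/n}^τ (κ-p) f p dp` and
`r(τ) = F(τ) = ∫_{1/n}^τ f`.  The optimal cutoff is `τ* = κ - lam` with
`λ = -(Sr/Sa)`; moreover `τ* < κ` iff `Sr < 0`, `τ* > κ` iff `Sr > 0`, and
`τ* = κ` iff `Sr = 0`. -/
theorem cutoff_kappa_minus_lambda_optimal_treated
    (n : ℕ) (hn : 0 < n) (κ θ Sa Sr lam : ℝ) (hSa : 0 < Sa)
    (hlam : lam = -(Sr / Sa))
    (f F A score : ℝ → ℝ)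
    (hf_cont : ContinuousOn f (Set.Icc (1 / (n : ℝ)) 1))
    (hf_pos : ∀ p ∈ Set.Icc (1 / (n : ℝ)) 1, 0 < f p)
    (hF : ∀ τ, F τ = ∫ p in (1 / (n : ℝ))..τ, f p)
    (hA : ∀ τ, A τ = θ + ∫ p in (1 / (n : ℝ))..τ, (κ - p) * f p)
    (hscore : ∀ τ, score τ = Sa * A τ + Sr * F τ)
    (hτ : κ - lam ∈ Set.Icc (1 / (n : ℝ)) 1) :
    (∀ τ ∈ Set.Icc (1 / (n : ℝ)) 1, score τ ≤ score (κ - lam)) ∧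
      (Sr < 0 → κ - lam < κ) ∧ (0 < Sr → κ < κ - lam) ∧ (Sr = 0 → κ - lam = κ) := by
  have hSane : Sa ≠ 0 := ne_of_gt hSa
  set c : ℝ := κ - lam with hc
  have hck : c - κ = Sr / Sa := by rw [hc, hlam]; ring
  have hSr : Sr = Sa * (c - κ) := by rw [hck]; field_simp
  set l : ℝ := 1 / (n : ℝ) with hl
  have hcont1 : ∀ a b, a ∈ Set.Icc l 1 → b ∈ Set.Icc l 1 →
      IntervalIntegrable (fun p => (κ - p) * f p) volume a b := by
    intro a b ha hb
    apply ContinuousOn.intervalIntegrable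
    exact ((continuous_const.sub continuous_id).continuousOn.mul
      (hf_cont.mono (Set.uIcc_subset_Icc ha hb)))
  have hcontf : ∀ a b, a ∈ Set.Icc l 1 → b ∈ Set.Icc l 1 →
      IntervalIntegrable f volume a b := by
    intro a b ha hb
    exact (hf_cont.mono (Set.uIcc_subset_Icc ha hb)).intervalIntegrable
  have hl1 : l ∈ Set.Icc l 1 := ⟨le_refl l, le_trans hτ.1 hτ.2⟩
  refine ⟨?_, ?_, ?_, ?_⟩
  · intro τ hτm
    have key : score c - score τ = Sa * ∫ p in τ..c, (c - p) * f p := by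
      rw [hscore, hscore, hA, hA, hF, hF]
      have h1 : (∫ p in l..c, (κ - p) * f p) - ∫ p in l..τ, (κ - p) * f p
          = ∫ p in τ..c, (κ - p) * f p :=
        intervalIntegral.integral_interval_sub_left (hcont1 l c hl1 hτ)
          (hcont1 l τ hl1 hτm)
      have h2 : (∫ p in l..c, f p) - ∫ p in l..τ, f p = ∫ p in τ..c, f p :=
        intervalIntegral.integral_interval_sub_left (hcontf l c hl1 hτ)
          (hcontf l τ hl1 hτm)
      have h3 : ∫ p in τ..c, (c - p) * f p
          = (∫ p in τ..c, (κ - p) * f p) + (c - κ) * ∫ p in τ..c, f p := by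
        rw [← intervalIntegral.integral_const_mul,
          ← intervalIntegral.integral_add (hcont1 τ c hτm hτ)
            ((hcontf τ c hτm hτ).const_mul _)]
        congr 1
        ext p
        ring
      rw [h3]
      rw [hSr]
      linear_combination Sa * h1 + Sa * (c - κ) * h2
    have hnn : 0 ≤ ∫ p in τ..c, (c - p) * f p := by
      rcases le_total τ c with h | h
      · apply intervalIntegral.integral_nonneg h
        intro u hu
        have hu' : u ∈ Set.Icc l 1 := ⟨le_trans hτm.1 hu.1, le_trans hu.2 hτ.2⟩
        exact mul_nonneg (by linarith [hu.2]) (hf_pos u hu').le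
      · have hneg : 0 ≤ ∫ p in c..τ, -((c - p) * f p) := by
          apply intervalIntegral.integral_nonneg h
          intro u hu
          have hu' : u ∈ Set.Icc l 1 := ⟨le_trans hτ.1 hu.1, le_trans hu.2 hτm.2⟩
          have := mul_nonpos_of_nonpos_of_nonneg (by linarith [hu.1] : c - u ≤ 0)
            (hf_pos u hu').le
          linarith
        rw [intervalIntegral.integral_neg] at hneg
        rw [intervalIntegral.integral_symm c τ]
        linarith
    nlinarith [key, hnn]
  · intro h
    have : Sr / Sa < 0 := div_neg_of_neg_of_pos h hSa
    linarith [hck]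
  · intro h
    have : 0 < Sr / Sa := div_pos h hSa
    linarith [hck]
  · intro h
    have : Sr / Sa = 0 := by rw [h]; simp
    linarith [hck]
end

section
/- In the conditional setting (D = 1), the maximal achievable accuracy A(κ) = θ + ∫_{1/n}^{κ}(κ−p) f(p) dp strictly exceeds both the worker's unaided accuracy θ and the AI's accuracy κ, provided f > 0 on [1/n,1] and κ ∈ (1/n,1). -/
open MeasureTheory Set

/-- In the conditional setting (`D = 1`), maximal achievable accuracy
`A(κ) = θ + ∫_{1/n}^κ (κ-p) f p dp` strictly exceeds both the worker's unaided
accuracy `θ` and the AI's accuracy `κ`, provided `f > 0` on `[1/n,1]` and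
`κ ∈ (1/n, 1)`. -/
theorem collaboration_beats_both
    (n : ℕ) (hn : 0 < n) (κ θ : ℝ) (hκ : κ ∈ Set.Ioo (1 / (n : ℝ)) 1)
    (f A : ℝ → ℝ)
    (hf_cont : ContinuousOn f (Set.Icc (1 / (n : ℝ)) 1))
    (hf_pos : ∀ p ∈ Set.Icc (1 / (n : ℝ)) 1, 0 < f p)
    (hmass : (∫ p in (1 / (n : ℝ))..1, f p) = 1)
    (hθ : (∫ p in (1 / (n : ℝ))..1, p * f p) = θ)
    (hA : ∀ τ, A τ = θ + ∫ p in (1 / (n : ℝ))..τ, (κ - p) * f p) :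
    θ < A κ ∧ κ < A κ := by
  obtain ⟨haκ, hκ1⟩ := hκ
  set a := 1 / (n : ℝ) with ha
  have ha1 : a < 1 := haκ.trans hκ1
  have hsub1 : Set.uIcc a κ ⊆ Set.Icc a 1 := by
    rw [Set.uIcc_of_le haκ.le]; exact Set.Icc_subset_Icc le_rfl hκ1.le
  have hsub2 : Set.uIcc κ 1 ⊆ Set.Icc a 1 := by
    rw [Set.uIcc_of_le hκ1.le]; exact Set.Icc_subset_Icc haκ.le le_rfl
  have hsub3 : Set.uIcc a 1 ⊆ Set.Icc a 1 := by rw [Set.uIcc_of_le ha1.le]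
  have hcont1 : ContinuousOn (fun p => (κ - p) * f p) (Set.Icc a 1) :=
    (continuousOn_const.sub continuousOn_id).mul hf_cont
  have hcont2 : ContinuousOn (fun p => (p - κ) * f p) (Set.Icc a 1) :=
    (continuousOn_id.sub continuousOn_const).mul hf_cont
  have hcont3 : ContinuousOn (fun p => p * f p) (Set.Icc a 1) :=
    continuousOn_id.mul hf_cont
  have hint1 : IntervalIntegrable (fun p => (κ - p) * f p) volume a κ :=
    (hcont1.mono hsub1).intervalIntegrable
  have hint2a : IntervalIntegrable (fun p => (p - κ) * f p) volume a κ :=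
    (hcont2.mono hsub1).intervalIntegrable
  have hint2b : IntervalIntegrable (fun p => (p - κ) * f p) volume κ 1 :=
    (hcont2.mono hsub2).intervalIntegrable
  have hint3 : IntervalIntegrable (fun p => p * f p) volume a 1 :=
    (hcont3.mono hsub3).intervalIntegrable
  have hintf : IntervalIntegrable f volume a 1 :=
    (hf_cont.mono hsub3).intervalIntegrable
  -- first integral positive
  have hI : 0 < ∫ p in a..κ, (κ - p) * f p := by
    apply intervalIntegral.intervalIntegral_pos_of_pos_on hint1 _ haκ
    intro x hx
    exact mul_pos (by linarith [hx.2]) (hf_pos x ⟨hx.1.le, hx.2.le.trans hκ1.le⟩)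
  -- second integral positive
  have hJ : 0 < ∫ p in κ..1, (p - κ) * f p := by
    apply intervalIntegral.intervalIntegral_pos_of_pos_on hint2b _ hκ1
    intro x hx
    exact mul_pos (by linarith [hx.1]) (hf_pos x ⟨haκ.le.trans hx.1.le, hx.2.le⟩)
  -- total: ∫_a^1 (p-κ) f = θ - κ
  have htot : (∫ p in a..1, (p - κ) * f p) = θ - κ := by
    have : (∫ p in a..1, (p - κ) * f p)
        = (∫ p in a..1, p * f p) - κ * ∫ p in a..1, f p := by
      rw [← intervalIntegral.integral_const_mul, ← intervalIntegral.integral_sub hint3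
        (hintf.const_mul κ)]
      congr 1; ext p; ring
    rw [this, hθ, hmass]; ring
  have hsplit : (∫ p in a..κ, (p - κ) * f p) + (∫ p in κ..1, (p - κ) * f p) = θ - κ := by
    rw [intervalIntegral.integral_add_adjacent_intervals hint2a hint2b, htot]
  have hneg : (∫ p in a..κ, (κ - p) * f p) = -∫ p in a..κ, (p - κ) * f p := by
    rw [← intervalIntegral.integral_neg]
    congr 1; ext p; ring
  constructor
  · rw [hA κ]; linarith
  · rw [hA κ, hneg]; linarith
end

section
/- If the score is linear, S_t(a,r) = a − λ·r with λ > 0, then the score-maximizing cutoff is τ* = κ − λ, and the resulting accuracy loss relative to the accuracy-maximizing cutoff κ equals ∫_{κ−λ}^{κ} (κ − p) f(p) dp > 0 (when κ − λ ≥ 1/n and f > 0). -/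
open MeasureTheory Set

/-- With linear score `S(τ) = A(τ) - λ F(τ)`, `λ > 0`,
`A(τ) = θ + ∫_{1/n}^τ (κ-p) f p dp`, `F(τ) = ∫_{1/n}^τ f` (D = 1 normalization),
the score-maximizing cutoff is `τ* = κ - λ`, and the accuracy loss relative to
the accuracy-maximizing cutoff `κ` equals `∫_{κ-λ}^{κ} (κ-p) f p dp > 0`
(when `κ - λ ≥ 1/n` and `f > 0`). -/
theorem linear_score_optimal_cutoff_and_accuracy_loss
    (n : ℕ) (hn : 0 < n) (κ θ lam : ℝ) (hlam : 0 < lam)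
    (hκ : κ ∈ Set.Ioo (1 / (n : ℝ)) 1) (hτ : 1 / (n : ℝ) ≤ κ - lam)
    (f F A S : ℝ → ℝ)
    (hf_cont : ContinuousOn f (Set.Icc (1 / (n : ℝ)) 1))
    (hf_pos : ∀ p ∈ Set.Icc (1 / (n : ℝ)) 1, 0 < f p)
    (hF : ∀ τ, F τ = ∫ p in (1 / (n : ℝ))..τ, f p)
    (hA : ∀ τ, A τ = θ + ∫ p in (1 / (n : ℝ))..τ, (κ - p) * f p)
    (hS : ∀ τ, S τ = A τ - lam * F τ) :
    (∀ τ ∈ Set.Icc (1 / (n : ℝ)) 1, S τ ≤ S (κ - lam)) ∧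
      A κ - A (κ - lam) = (∫ p in (κ - lam)..κ, (κ - p) * f p) ∧
      0 < ∫ p in (κ - lam)..κ, (κ - p) * f p := by
  set a : ℝ := 1 / (n : ℝ) with ha
  have hκ1 : κ < 1 := hκ.2
  have hκa : a < κ := hκ.1
  have hkl : κ - lam < κ := by linarith
  have hmem : ∀ x, a ≤ x → x ≤ 1 → x ∈ Icc a 1 := fun x h1 h2 => ⟨h1, h2⟩
  -- integrability helpers
  have hsub : ∀ u v : ℝ, u ∈ Icc a 1 → v ∈ Icc a 1 → Set.uIcc u v ⊆ Icc a 1 := by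
    intro u v hu hv
    exact Set.ordConnected_Icc.uIcc_subset hu hv
  have hif : ∀ (g : ℝ → ℝ), ContinuousOn g (Icc a 1) → ∀ u v : ℝ, u ∈ Icc a 1 → v ∈ Icc a 1 →
      IntervalIntegrable g volume u v := by
    intro g hg u v hu hv
    exact (hg.mono (hsub u v hu hv)).intervalIntegrable
  have hcont1 : ContinuousOn (fun p => (κ - p) * f p) (Icc a 1) :=
    (continuousOn_const.sub continuousOn_id).mul hf_cont
  have hcont2 : ContinuousOn (fun p => (κ - lam - p) * f p) (Icc a 1) :=
    (continuousOn_const.sub continuousOn_id).mul hf_cont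
  have hklm : κ - lam ∈ Icc a 1 := ⟨hτ, by linarith⟩
  have hκm : κ ∈ Icc a 1 := ⟨le_of_lt hκa, le_of_lt hκ1⟩
  have ham : a ∈ Icc a 1 := ⟨le_refl _, by linarith⟩
  refine ⟨?_, ?_, ?_⟩
  · -- optimality
    intro τ hτm
    have hSτ : ∀ σ, σ ∈ Icc a 1 → S σ = θ + ∫ p in a..σ, (κ - lam - p) * f p := by
      intro σ hσ
      have key : (∫ p in a..σ, (κ - lam - p) * f p)
          = (∫ p in a..σ, (κ - p) * f p) - ∫ p in a..σ, lam * f p := by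
        rw [← intervalIntegral.integral_sub (hif _ hcont1 a σ ham hσ)
          ((hif f hf_cont a σ ham hσ).const_mul lam)]
        apply intervalIntegral.integral_congr
        intro x _; ring
      rw [hS, hA, hF, key, intervalIntegral.integral_const_mul]
      ring
    rw [hSτ τ hτm, hSτ _ hklm]
    have hdiff : (∫ p in a..(κ - lam), (κ - lam - p) * f p)
        - (∫ p in a..τ, (κ - lam - p) * f p) = ∫ p in τ..(κ - lam), (κ - lam - p) * f p := by
      rw [← intervalIntegral.integral_interval_sub_left
        (hif _ hcont2 a (κ - lam) ham hklm) (hif _ hcont2 a τ ham hτm)]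
    have hnn : 0 ≤ ∫ p in τ..(κ - lam), (κ - lam - p) * f p := by
      rcases le_total τ (κ - lam) with h | h
      · apply intervalIntegral.integral_nonneg h
        intro u hu
        have hu1 : u ∈ Icc a 1 := ⟨le_trans hτm.1 hu.1, le_trans hu.2 hklm.2⟩
        have := hf_pos u hu1
        nlinarith [hu.2]
      · rw [intervalIntegral.integral_symm (κ - lam) τ, ← intervalIntegral.integral_neg]
        apply intervalIntegral.integral_nonneg h
        intro u hu
        have hu1 : u ∈ Icc a 1 := ⟨le_trans hklm.1 hu.1, le_trans hu.2 hτm.2⟩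
        have := hf_pos u hu1
        nlinarith [hu.1]
    linarith
  · rw [hA, hA]
    rw [← intervalIntegral.integral_interval_sub_left
      (hif _ hcont1 a κ ham hκm) (hif _ hcont1 a (κ - lam) ham hklm)]
    ring
  · apply intervalIntegral.intervalIntegral_pos_of_pos_on
      (hif _ hcont1 (κ - lam) κ hklm hκm)
    · intro x hx
      have hx1 : x ∈ Icc a 1 := ⟨le_trans hklm.1 (le_of_lt hx.1), le_trans (le_of_lt hx.2) hκm.2⟩
      have := hf_pos x hx1
      nlinarith [hx.2]
    · exact hkl
end
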